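/- Let r ≥ 3 and let F be an r-graph, m+1 ≥ n(F), and let p = n(H^F_{m+1}). If G is an H^F_{m+1}-free r-graph on [n], then G contains a subgraph G' that is ℋ^F_{m+1}-free with |G'| ≥ |G| − p·C(n,r−3)·C(n,2). In particular, π(H^F_{m+1}) = π(ℋ^F_{m+1}). -/

import Mathlib

open Finset
open scoped BigOperators Classical

abbrev HG := Finset (Finset ℕ)

/-- The vertex set of a hypergraph: union of its edges. -/
def hverts (G : HG) : Finset ℕ := G.sup id

/-- `G` is `r`-uniform: every edge has `r` vertices. -/
def Uniform (r : ℕ) (G : HG) : Prop := ∀ e ∈ G, e.card = r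

/-- The pair `{u,v}` is covered in `G`: some edge contains both. -/
def Covered (G : HG) (u v : ℕ) : Prop := ∃ e ∈ G, u ∈ e ∧ v ∈ e

/-- `G` contains a copy of `F`. -/
def IsCopyIn (F G : HG) : Prop :=
  ∃ φ : ℕ → ℕ, Set.InjOn φ (hverts F : Set ℕ) ∧ ∀ e ∈ F, e.image φ ∈ G

/-- The subgraph of `G` induced by `C`. -/
def induced (G : HG) (C : Finset ℕ) : HG := G.filter (fun e => e ⊆ C)

/-- `G` contains a member of the family `ℋ^F_p`: there is a core `C` of `p`
vertices such that the subgraph induced by `C` contains a copy of `F` and every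
pair of vertices of `C` is covered in `G`. -/
def ContainsHFam (F : HG) (p : ℕ) (G : HG) : Prop :=
  ∃ C : Finset ℕ, C.card = p ∧ IsCopyIn F (induced G C) ∧
    ∀ u ∈ C, ∀ v ∈ C, u ≠ v → Covered G u v

/-- Turán number: maximum number of edges of an `r`-graph on vertex set `[n]`
satisfying the "freeness" predicate `P`. -/
noncomputable def exNum (r n : ℕ) (P : HG → Prop) : ℕ :=
  sSup {m : ℕ | ∃ G : HG, Uniform r G ∧ (∀ e ∈ G, e ⊆ Finset.range n) ∧ P G ∧ G.card = m}

/-- The Lagrangian polynomial `p_G(x) = r! ∑_{e∈G} ∏_{i∈e} x_i`. -/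
noncomputable def pPoly (r : ℕ) (G : HG) (x : ℕ → ℝ) : ℝ :=
  (r.factorial : ℝ) * ∑ e ∈ G, ∏ i ∈ e, x i

/-- The Lagrangian `λ(G)`. -/
noncomputable def lagrangian (r : ℕ) (G : HG) : ℝ :=
  sSup {v : ℝ | ∃ x : ℕ → ℝ, (∀ i, 0 ≤ x i) ∧ (∑ i ∈ hverts G, x i) = 1 ∧ v = pPoly r G x}

/-- The Lagrangian density `π_λ(F)`. -/
noncomputable def piLambda (r : ℕ) (F : HG) : ℝ :=
  sSup {v : ℝ | ∃ G : HG, Uniform r G ∧ ¬ IsCopyIn F G ∧ v = lagrangian r G}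

/-- `G` is `m`-partite. -/
def MPartite (m : ℕ) (G : HG) : Prop :=
  ∃ f : ℕ → Fin m, ∀ e ∈ G, ∀ u ∈ e, ∀ v ∈ e, u ≠ v → f u ≠ f v

/-- `ℋ^F_{m+1}` is `m`-stable. -/
def MStable (r m : ℕ) (F : HG) : Prop :=
  ∀ ε : ℝ, 0 < ε → ∃ δ : ℝ, 0 < δ ∧ ∃ n₁ : ℕ, ∀ n : ℕ, n₁ ≤ n →
    ∀ G : HG, Uniform r G → (∀ e ∈ G, e ⊆ Finset.range n) →
      ¬ ContainsHFam F (m + 1) G →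
      ((m.descFactorial r : ℝ) / (m : ℝ) ^ r - δ) * (n.choose r : ℝ) < (G.card : ℝ) →
      ∃ Z : Finset ℕ, (Z.card : ℝ) ≤ ε * n ∧
        MPartite m (G.filter (fun e => Disjoint e Z))

/-- Pairs of vertices of `C` not covered in `F`. -/
def uncovPairs (F : HG) (C : Finset ℕ) : Finset (Finset ℕ) :=
  (C.powersetCard 2).filter (fun s => ¬ ∃ e ∈ F, s ⊆ e)

/-- `H` is an expanded `p`-clique with an embedded `F` (i.e. a copy of `H^F_p`). -/
def IsExpandedClique (r : ℕ) (F : HG) (p : ℕ) (H : HG) : Prop :=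
  ∃ C : Finset ℕ, hverts F ⊆ C ∧ C.card = p ∧
    ∃ B : Finset ℕ → Finset ℕ,
      (∀ s ∈ uncovPairs F C, (B s).card = r - 2 ∧ Disjoint (B s) C) ∧
      (∀ s ∈ uncovPairs F C, ∀ t ∈ uncovPairs F C, s ≠ t → Disjoint (B s) (B t)) ∧
      H = F ∪ (uncovPairs F C).image (fun s => s ∪ B s)

/-- The balanced complete `m`-partite `r`-graph `T_r(n,m)` on vertex set `[n]`,
with parts the residue classes modulo `m`. -/
def turanGraph (r n m : ℕ) : HG :=
  ((Finset.range n).powersetCard r).filter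
    (fun e => ∀ u ∈ e, ∀ v ∈ e, u ≠ v → u % m ≠ v % m)

/-- `F` has a vertex of degree 1. -/
def HasDeg1Vertex (F : HG) : Prop :=
  ∃ v ∈ hverts F, (F.filter (fun e => v ∈ e)).card = 1

/-- `T` is a tree on `k` vertices (a connected 2-graph with `k-1` edges). -/
def IsTreeGraph (T : HG) (k : ℕ) : Prop :=
  Uniform 2 T ∧ (hverts T).card = k ∧ T.card + 1 = k ∧
    ∀ u ∈ hverts T, ∀ v ∈ hverts T,
      Relation.ReflTransGen (fun a b => ({a, b} : Finset ℕ) ∈ T) u v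

/-- The `k`-vertex tree `T` satisfies the Erdős–Sós conjecture:
`ex(n,T) ≤ n(k-2)/2` for all `n`. -/
def SatisfiesES (T : HG) (k : ℕ) : Prop :=
  ∀ n : ℕ, 2 * exNum 2 n (fun G => ¬ IsCopyIn T G) ≤ n * (k - 2)

/-- The function `f_r(x) = (∏_{i=1}^{r-1} (x+i-2)) / (x+r-3)^r`. -/
noncomputable def frf (r : ℕ) (x : ℝ) : ℝ :=
  (∏ i ∈ Finset.Icc 1 (r - 1), (x + (i : ℝ) - 2)) / (x + (r : ℝ) - 3) ^ r

/-- `M` is the rightmost maximum of `f_r` on `[2,∞)`. -/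
def IsRightmostMax (r : ℕ) (M : ℝ) : Prop :=
  2 ≤ M ∧ (∀ y : ℝ, 2 ≤ y → frf r y ≤ frf r M) ∧
    (∀ y : ℝ, 2 ≤ y → frf r y = frf r M → y ≤ M)

/-- `F` is the `(r-2)`-fold enlargement of the 2-graph `T`. -/
def IsEnlargement (r : ℕ) (T F : HG) : Prop :=
  ∃ D : Finset ℕ, D.card = r - 2 ∧ Disjoint D (hverts T) ∧ F = T.image (fun e => e ∪ D)

/-- The link of a vertex `i` in `G`. -/
def link (G : HG) (i : ℕ) : HG := (G.filter (fun e => i ∈ e)).image (fun e => e.erase i)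

/-- `λ_i = ∂p_G(x)/∂x_i = r! ∑_{f ∈ L_G(i)} ∏_{j∈f} x_j`. -/
noncomputable def lamI (r : ℕ) (G : HG) (x : ℕ → ℝ) (i : ℕ) : ℝ :=
  (r.factorial : ℝ) * ∑ f ∈ link G i, ∏ j ∈ f, x j

/-- `G` is a blowup of `L`. -/
def IsBlowup (L G : HG) : Prop :=
  ∃ V : ℕ → Finset ℕ,
    (∀ i ∈ hverts L, ∀ j ∈ hverts L, i ≠ j → Disjoint (V i) (V j)) ∧
    ∀ e : Finset ℕ, e ∈ G ↔ ∃ f ∈ L, ∃ φ : ℕ → ℕ, (∀ i ∈ f, φ i ∈ V i) ∧ e = f.image φ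

/-- `G` contains an `s`-sunflower with kernel `D`. -/
def HasSunflower (G : HG) (D : Finset ℕ) (s : ℕ) : Prop :=
  ∃ S : Finset (Finset ℕ), S ⊆ G ∧ S.card = s ∧ (∀ A ∈ S, D ⊆ A) ∧
    ∀ A ∈ S, ∀ B ∈ S, A ≠ B → A ∩ B = D

/-- `F` covers pairs: every pair of vertices of `F` lies in some edge. -/
def CoversPairs (F : HG) : Prop :=
  ∀ u ∈ hverts F, ∀ v ∈ hverts F, u ≠ v → Covered F u v

/-- `d(G)`: the maximum average degree among nonempty subgraphs of `G`. -/
noncomputable def maxAvgDeg (G : HG) : ℝ :=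
  sSup {v : ℝ | ∃ H : HG, H ⊆ G ∧ H.Nonempty ∧ v = 2 * (H.card : ℝ) / ((hverts H).card : ℝ)}

/-- Symmetrizing `v` to `u`: remove all edges containing `v` and replace them
with `{D ∪ {v} : D ∈ L_G(u)}`. -/
def symmetrize (G : HG) (u v : ℕ) : HG :=
  G.filter (fun e => v ∉ e) ∪ (G.filter (fun e => u ∈ e)).image (fun e => insert v (e.erase u))

/-- The noncomplete transversals of an `m`-partite `r`-graph `L` with parts `A`. -/
noncomputable def noncompTrans (r m : ℕ) (L : HG) (A : Fin m → Finset ℕ) : Finset (Finset ℕ) :=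
  ((Finset.univ.biUnion A).powerset).filter
    (fun S => (∀ i, (S ∩ A i).card = 1) ∧ ∃ e : Finset ℕ, e ⊆ S ∧ e.card = r ∧ e ∉ L)

lemma mem_hverts {v : ℕ} {G : HG} : v ∈ hverts G ↔ ∃ e ∈ G, v ∈ e := by
  simp [hverts, Finset.mem_sup]

lemma hverts_mono {G G' : HG} (h : G ⊆ G') : hverts G ⊆ hverts G' :=
  le_iff_subset.mp (Finset.sup_mono h)

lemma isCopyIn_mono {F G G' : HG} (h : G ⊆ G') : IsCopyIn F G → IsCopyIn F G' := by
  rintro ⟨φ, h1, h2⟩; exact ⟨φ, h1, fun e he => h (h2 e he)⟩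

lemma covered_mono {G G' : HG} (h : G ⊆ G') {u v : ℕ} : Covered G u v → Covered G' u v := by
  rintro ⟨e, he, hu, hv⟩; exact ⟨e, h he, hu, hv⟩

lemma induced_mono' {G G' : HG} (h : G ⊆ G') (C : Finset ℕ) : induced G C ⊆ induced G' C :=
  Finset.filter_subset_filter _ h

lemma containsHFam_mono {F : HG} {p : ℕ} {G G' : HG} (h : G ⊆ G') :
    ContainsHFam F p G → ContainsHFam F p G' := by
  rintro ⟨C, h1, h2, h3⟩
  exact ⟨C, h1, isCopyIn_mono (induced_mono' h C) h2,
    fun u hu v hv huv => covered_mono h (h3 u hu v hv huv)⟩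

lemma containsHFam_relabel {F : HG} {p : ℕ} {G : HG} (σ : Equiv.Perm ℕ)
    (h : ContainsHFam F p (G.image (fun e => e.image σ))) : ContainsHFam F p G := by
  obtain ⟨C, hC, ⟨φ, hφ1, hφ2⟩, hcov⟩ := h
  refine ⟨C.image σ.symm, by rw [Finset.card_image_of_injective _ σ.symm.injective, hC],
    ⟨σ.symm ∘ φ, ?_, ?_⟩, ?_⟩
  · exact (σ.symm.injective.injOn).comp hφ1 (Set.mapsTo_univ _ _)
  · intro e he
    have h2 := hφ2 e he
    simp only [induced, Finset.mem_filter, Finset.mem_image] at h2 ⊢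
    obtain ⟨⟨d, hd, hde⟩, hsub⟩ := h2
    constructor
    · have : e.image (σ.symm ∘ φ) = d := by
        rw [← Finset.image_image, ← hde]
        ext x; simp
      rwa [this]
    · rw [← Finset.image_image]
      exact Finset.image_subset_image hsub
  · intro u hu v hv huv
    simp only [Finset.mem_image] at hu hv
    obtain ⟨u', hu', rfl⟩ := hu
    obtain ⟨v', hv', rfl⟩ := hv
    obtain ⟨e, he, heu, hev⟩ := hcov u' hu' v' hv' (fun hh => huv (by rw [hh]))
    simp only [Finset.mem_image] at he
    obtain ⟨d, hd, rfl⟩ := he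
    refine ⟨d, hd, ?_, ?_⟩
    · simp only [Finset.mem_image] at heu
      obtain ⟨y, hy, hyy⟩ := heu
      have : y = σ.symm u' := by
        apply σ.injective; simp [hyy]
      rwa [← this]
    · simp only [Finset.mem_image] at hev
      obtain ⟨y, hy, hyy⟩ := hev
      have : y = σ.symm v' := by
        apply σ.injective; simp [hyy]
      rwa [← this]

lemma mem_uncovPairs {F : HG} {C s : Finset ℕ} :
    s ∈ uncovPairs F C ↔ s ⊆ C ∧ s.card = 2 ∧ ¬ ∃ e ∈ F, s ⊆ e := by
  simp only [uncovPairs, Finset.mem_filter, Finset.mem_powersetCard]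
  tauto

/-- Key structural fact: for `m ≥ 1`, the core is inside `hverts H`. -/
lemma core_subset_hverts {m : ℕ} {F H : HG} {C₀ : Finset ℕ} {B : Finset ℕ → Finset ℕ}
    (hm : 1 ≤ m) (hC₀ : C₀.card = m + 1)
    (hHeq : H = F ∪ (uncovPairs F C₀).image (fun s => s ∪ B s)) :
    C₀ ⊆ hverts H := by
  intro v hv
  by_cases hvF : v ∈ hverts F
  · exact hverts_mono (by rw [hHeq]; exact Finset.subset_union_left) hvF
  · obtain ⟨w, hw, hwv⟩ := Finset.exists_mem_ne (by omega : 1 < C₀.card) v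
    have hs : ({v, w} : Finset ℕ) ∈ uncovPairs F C₀ := by
      rw [mem_uncovPairs]
      refine ⟨by intro x hx; simp at hx; rcases hx with rfl | rfl <;> assumption, ?_, ?_⟩
      · rw [Finset.card_insert_of_notMem (by simp [Ne.symm hwv]), Finset.card_singleton]
      · rintro ⟨e, he, hsub⟩
        exact hvF (mem_hverts.mpr ⟨e, he, hsub (by simp)⟩)
    have : ({v, w} ∪ B {v, w} : Finset ℕ) ∈ H := by
      rw [hHeq]
      exact Finset.mem_union_right _ (Finset.mem_image_of_mem _ hs)
    exact mem_hverts.mpr ⟨_, this, by simp⟩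

/-- Lemma B: a copy of `H^F_{m+1}` yields a member of `ℋ^F_{m+1}`. -/
lemma copy_to_fam {r m : ℕ} {F H G : HG} (hm : 1 ≤ m)
    (hH : IsExpandedClique r F (m + 1) H) (hcopy : IsCopyIn H G) :
    ContainsHFam F (m + 1) G := by
  obtain ⟨C₀, hFC, hC₀, B, hB1, hB2, hHeq⟩ := hH
  obtain ⟨ψ, hψinj, hψe⟩ := hcopy
  have hFH : F ⊆ H := by rw [hHeq]; exact Finset.subset_union_left
  have hcore : C₀ ⊆ hverts H := core_subset_hverts hm hC₀ hHeq
  have hinjC₀ : Set.InjOn ψ (C₀ : Set ℕ) := hψinj.mono (by exact_mod_cast hcore)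
  refine ⟨C₀.image ψ, by rw [Finset.card_image_of_injOn hinjC₀, hC₀], ⟨ψ, ?_, ?_⟩, ?_⟩
  · exact hψinj.mono (by exact_mod_cast hverts_mono hFH)
  · intro e he
    rw [induced, Finset.mem_filter]
    have hsub : e ⊆ C₀ := fun x hx => hFC (mem_hverts.mpr ⟨e, he, hx⟩)
    exact ⟨hψe e (hFH he), Finset.image_subset_image hsub⟩
  · intro u hu v hv huv
    simp only [Finset.mem_image] at hu hv
    obtain ⟨x, hx, rfl⟩ := hu
    obtain ⟨y, hy, rfl⟩ := hv
    have hxy : x ≠ y := fun h => huv (by rw [h])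
    by_cases hcov : ∃ e ∈ F, ({x, y} : Finset ℕ) ⊆ e
    · obtain ⟨e, he, hsub⟩ := hcov
      exact ⟨e.image ψ, hψe e (hFH he),
        Finset.mem_image_of_mem ψ (hsub (by simp)),
        Finset.mem_image_of_mem ψ (hsub (by simp))⟩
    · have hs : ({x, y} : Finset ℕ) ∈ uncovPairs F C₀ := by
        rw [mem_uncovPairs]
        refine ⟨by intro z hz; simp at hz; rcases hz with rfl | rfl <;> assumption,
          by rw [Finset.card_insert_of_notMem (by simp [hxy]), Finset.card_singleton], hcov⟩
      have hedge : ({x, y} ∪ B {x, y} : Finset ℕ) ∈ H := by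
        rw [hHeq]; exact Finset.mem_union_right _ (Finset.mem_image_of_mem _ hs)
      exact ⟨_, hψe _ hedge, Finset.mem_image_of_mem ψ (by simp),
        Finset.mem_image_of_mem ψ (by simp)⟩

lemma count_triple {r n : ℕ} (hr : 3 ≤ r) {G : HG} (hGu : Uniform r G)
    (hGr : ∀ e ∈ G, e ⊆ Finset.range n) {T : Finset ℕ} (hT : T.card = 3) :
    (G.filter (fun e => T ⊆ e)).card ≤ n.choose (r - 3) := by
  have h1 : (G.filter (fun e => T ⊆ e)).card ≤ ((Finset.range n).powersetCard (r - 3)).card := by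
    apply Finset.card_le_card_of_injOn (fun e => e \ T)
    · intro e he
      simp only [Finset.coe_filter, Set.mem_setOf_eq] at he
      simp only [Finset.mem_coe, Finset.mem_powersetCard]
      refine ⟨(Finset.sdiff_subset).trans (hGr e he.1), ?_⟩
      rw [Finset.card_sdiff_of_subset he.2, hGu e he.1, hT]
    · intro e₁ h₁ e₂ h₂ heq
      simp only [Finset.coe_filter, Set.mem_setOf_eq] at h₁ h₂
      have := congrArg (· ∪ T) heq
      simpa [Finset.sdiff_union_of_subset h₁.2, Finset.sdiff_union_of_subset h₂.2] using this
  rwa [Finset.card_powersetCard, Finset.card_range] at h1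

lemma greedy_edges {r n p : ℕ} (hr : 3 ≤ r) {G : HG} (hGu : Uniform r G)
    (hGr : ∀ e ∈ G, e ⊆ Finset.range n)
    {C : Finset ℕ} {P : Finset (Finset ℕ)}
    (hP : ∀ s ∈ P, s ⊆ C ∧ s.card = 2 ∧
      p * n.choose (r - 3) < (G.filter (fun e' => s ⊆ e')).card)
    (hsize : C.card + P.card * (r - 2) ≤ p) :
    ∃ E : Finset ℕ → Finset ℕ,
      (∀ s ∈ P, E s ∈ G ∧ s ⊆ E s ∧ Disjoint (E s \ s) C) ∧
      (∀ s ∈ P, ∀ s' ∈ P, s ≠ s' → Disjoint (E s \ s) (E s' \ s')) := by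
  suffices h : ∀ U : Finset (Finset ℕ), U ⊆ P → ∃ E : Finset ℕ → Finset ℕ,
      (∀ s ∈ U, E s ∈ G ∧ s ⊆ E s ∧ Disjoint (E s \ s) C) ∧
      (∀ s ∈ U, ∀ s' ∈ U, s ≠ s' → Disjoint (E s \ s) (E s' \ s')) by
    exact h P Finset.Subset.rfl
  intro U
  induction U using Finset.induction_on with
  | empty => exact fun _ => ⟨fun _ => ∅, by simp, by simp⟩
  | @insert s₀ U hs₀U ih =>
    intro hsub
    have hUP : U ⊆ P := (Finset.subset_insert s₀ U).trans hsub
    have hs₀P : s₀ ∈ P := hsub (Finset.mem_insert_self s₀ U)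
    obtain ⟨E, hE1, hE2⟩ := ih hUP
    set S : Finset ℕ := C ∪ U.biUnion (fun s => E s \ s) with hS
    have hScard : S.card ≤ p := by
      calc S.card ≤ C.card + (U.biUnion (fun s => E s \ s)).card := Finset.card_union_le _ _
        _ ≤ C.card + ∑ s ∈ U, (E s \ s).card :=
            Nat.add_le_add_left (Finset.card_biUnion_le) _
        _ ≤ C.card + ∑ _s ∈ U, (r - 2) := by
            apply Nat.add_le_add_left
            apply Finset.sum_le_sum
            intro s hs
            obtain ⟨hEs, hsE, _⟩ := hE1 s hs
            rw [Finset.card_sdiff_of_subset hsE, hGu _ hEs, (hP s (hUP hs)).2.1]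
        _ = C.card + U.card * (r - 2) := by rw [Finset.sum_const, smul_eq_mul]
        _ ≤ C.card + P.card * (r - 2) := by
            have := Finset.card_le_card hUP
            exact Nat.add_le_add_left (Nat.mul_le_mul_right _ this) _
        _ ≤ p := hsize
    obtain ⟨hs₀C, hs₀2, hrich⟩ := hP s₀ hs₀P
    have hpick : ∃ e ∈ G, s₀ ⊆ e ∧ Disjoint (e \ s₀) S := by
      by_contra hno
      push_neg at hno
      have hsubB : G.filter (fun e => s₀ ⊆ e) ⊆
          (S \ s₀).biUnion (fun w => G.filter (fun e => insert w s₀ ⊆ e)) := by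
        intro e he
        rw [Finset.mem_filter] at he
        have := hno e he.1 he.2
        rw [Finset.not_disjoint_iff] at this
        obtain ⟨w, hw1, hw2⟩ := this
        rw [Finset.mem_sdiff] at hw1
        rw [Finset.mem_biUnion]
        exact ⟨w, Finset.mem_sdiff.mpr ⟨hw2, hw1.2⟩, Finset.mem_filter.mpr
          ⟨he.1, Finset.insert_subset hw1.1 he.2⟩⟩
      have hcount : (G.filter (fun e => s₀ ⊆ e)).card ≤ p * n.choose (r - 3) := by
        calc (G.filter (fun e => s₀ ⊆ e)).card
            ≤ ((S \ s₀).biUnion (fun w => G.filter (fun e => insert w s₀ ⊆ e))).card :=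
              Finset.card_le_card hsubB
          _ ≤ ∑ w ∈ S \ s₀, (G.filter (fun e => insert w s₀ ⊆ e)).card :=
              Finset.card_biUnion_le
          _ ≤ ∑ _w ∈ S \ s₀, n.choose (r - 3) := by
              apply Finset.sum_le_sum
              intro w hw
              apply count_triple hr hGu hGr
              rw [Finset.card_insert_of_notMem (Finset.mem_sdiff.mp hw).2, hs₀2]
          _ = (S \ s₀).card * n.choose (r - 3) := by rw [Finset.sum_const, smul_eq_mul]
          _ ≤ p * n.choose (r - 3) := by
              apply Nat.mul_le_mul_right
              exact le_trans (Finset.card_le_card (Finset.sdiff_subset)) hScard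
      omega
    obtain ⟨e', he'G, he's₀, he'disj⟩ := hpick
    refine ⟨Function.update E s₀ e', ?_, ?_⟩
    · intro s hs
      rcases Finset.mem_insert.mp hs with rfl | hsU
      · rw [Function.update_self]
        exact ⟨he'G, he's₀, Finset.disjoint_of_subset_right Finset.subset_union_left he'disj⟩
      · rw [Function.update_of_ne (by rintro rfl; exact hs₀U hsU)]
        exact hE1 s hsU
    · intro s hs s' hs' hss'
      have hsub' : ∀ u ∈ U, E u \ u ⊆ S := fun u hu =>
        le_trans (Finset.subset_biUnion_of_mem (fun s => E s \ s) hu) Finset.subset_union_right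
      rcases Finset.mem_insert.mp hs with rfl | hsU <;>
        rcases Finset.mem_insert.mp hs' with rfl | hs'U
      · exact absurd rfl hss'
      · rw [Function.update_self, Function.update_of_ne (by rintro rfl; exact hs₀U hs'U)]
        exact Finset.disjoint_of_subset_right (hsub' s' hs'U) he'disj
      · rw [Function.update_self, Function.update_of_ne (by rintro rfl; exact hs₀U hsU)]
        exact (Finset.disjoint_of_subset_right (hsub' s hsU) he'disj).symm
      · rw [Function.update_of_ne (by rintro rfl; exact hs₀U hsU),
          Function.update_of_ne (by rintro rfl; exact hs₀U hs'U)]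
        exact hE2 s hsU s' hs'U hss'

lemma deletion {r m : ℕ} (hr : 3 ≤ r) (hm : 1 ≤ m) {F H : HG}
    (hH : IsExpandedClique r F (m + 1) H)
    {n : ℕ} {G : HG} (hGu : Uniform r G) (hGr : ∀ e ∈ G, e ⊆ Finset.range n)
    (hfree : ¬ IsCopyIn H G) :
    ∃ G' : HG, G' ⊆ G ∧ ¬ ContainsHFam F (m + 1) G' ∧
      (G \ G').card ≤ (hverts H).card * n.choose (r - 3) * n.choose 2 := by
  classical
  set p := (hverts H).card with hp
  set t := p * n.choose (r - 3) with ht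
  set G' := G.filter (fun e => ∀ s : Finset ℕ, s ⊆ e → s.card = 2 →
    t < (G.filter (fun e' => s ⊆ e')).card) with hG'
  have hsubG : G' ⊆ G := Finset.filter_subset _ _
  refine ⟨G', hsubG, ?_, ?_⟩
  · -- freeness
    intro hfam
    obtain ⟨C, hCcard, ⟨φ, hφinj, hφe⟩, hcov⟩ := hfam
    obtain ⟨C₀, hFC, hC₀, B, hB1, hB2, hHeq⟩ := hH
    set A := hverts F with hA
    have hAC₀ : A ⊆ C₀ := hFC
    have hφA : A.image φ ⊆ C := by
      intro y hy
      rw [Finset.mem_image] at hy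
      obtain ⟨x, hx, rfl⟩ := hy
      obtain ⟨e, he, hxe⟩ := mem_hverts.mp hx
      have := hφe e he
      rw [induced, Finset.mem_filter] at this
      exact this.2 (Finset.mem_image_of_mem φ hxe)
    have hcardA : (A.image φ).card = A.card := Finset.card_image_of_injOn hφinj
    have hcard' : (C₀ \ A).card = (C \ A.image φ).card := by
      rw [Finset.card_sdiff_of_subset hAC₀, Finset.card_sdiff_of_subset hφA, hC₀, hCcard, hcardA]
    set g := Finset.equivOfCardEq hcard' with hg
    set ψ : ℕ → ℕ := fun x => if h : x ∈ C₀ \ A then (g ⟨x, h⟩ : ℕ) else φ x with hψ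
    have hψA : ∀ x ∈ A, ψ x = φ x := by
      intro x hx
      rw [hψ]; simp only
      rw [dif_neg (by simp [Finset.mem_sdiff, hx])]
    have hψC : ∀ x ∈ C₀, ψ x ∈ C := by
      intro x hx
      rw [hψ]; simp only
      by_cases h : x ∈ C₀ \ A
      · rw [dif_pos h]
        exact Finset.mem_sdiff.mp (g ⟨x, h⟩).2 |>.1
      · rw [dif_neg h]
        have hxA : x ∈ A := by by_contra hc; exact h (Finset.mem_sdiff.mpr ⟨hx, hc⟩)
        exact hφA (Finset.mem_image_of_mem φ hxA)
    have hψinjC₀ : Set.InjOn ψ (C₀ : Set ℕ) := by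
      intro x hx y hy hxy
      simp only [Finset.mem_coe] at hx hy
      rw [hψ] at hxy; simp only at hxy
      by_cases hx' : x ∈ C₀ \ A <;> by_cases hy' : y ∈ C₀ \ A
      · rw [dif_pos hx', dif_pos hy'] at hxy
        have := g.injective (Subtype.ext hxy)
        exact congrArg Subtype.val this
      · rw [dif_pos hx', dif_neg hy'] at hxy
        have hyA : y ∈ A := by by_contra hc; exact hy' (Finset.mem_sdiff.mpr ⟨hy, hc⟩)
        have h1 : (g ⟨x, hx'⟩ : ℕ) ∈ C \ A.image φ := (g ⟨x, hx'⟩).2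
        rw [hxy] at h1
        exact absurd (Finset.mem_image_of_mem φ hyA) (Finset.mem_sdiff.mp h1).2
      · rw [dif_neg hx', dif_pos hy'] at hxy
        have hxA : x ∈ A := by by_contra hc; exact hx' (Finset.mem_sdiff.mpr ⟨hx, hc⟩)
        have h1 : (g ⟨y, hy'⟩ : ℕ) ∈ C \ A.image φ := (g ⟨y, hy'⟩).2
        rw [← hxy] at h1
        exact absurd (Finset.mem_image_of_mem φ hxA) (Finset.mem_sdiff.mp h1).2
      · rw [dif_neg hx', dif_neg hy'] at hxy
        have hxA : x ∈ A := by by_contra hc; exact hx' (Finset.mem_sdiff.mpr ⟨hx, hc⟩)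
        have hyA : y ∈ A := by by_contra hc; exact hy' (Finset.mem_sdiff.mpr ⟨hy, hc⟩)
        exact hφinj (by exact_mod_cast hxA) (by exact_mod_cast hyA) hxy
    set uncov := uncovPairs F C₀ with huncov
    set P := uncov.image (fun s => s.image ψ) with hPdef
    have himginj : Set.InjOn (fun s => s.image ψ) (uncov : Set (Finset ℕ)) := by
      intro s hs s' hs' hss'
      simp only [Finset.mem_coe] at hs hs'
      have hsC₀ : s ⊆ C₀ := (mem_uncovPairs.mp hs).1
      have hs'C₀ : s' ⊆ C₀ := (mem_uncovPairs.mp hs').1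
      have hss2 : s.image ψ = s'.image ψ := hss'
      ext x
      constructor
      · intro hx
        have : ψ x ∈ s'.image ψ := by rw [← hss2]; exact Finset.mem_image_of_mem ψ hx
        rw [Finset.mem_image] at this
        obtain ⟨y, hy, hyx⟩ := this
        have := hψinjC₀ (by exact_mod_cast hs'C₀ hy) (by exact_mod_cast hsC₀ hx) hyx
        rwa [← this]
      · intro hx
        have : ψ x ∈ s.image ψ := by rw [hss2]; exact Finset.mem_image_of_mem ψ hx
        rw [Finset.mem_image] at this
        obtain ⟨y, hy, hyx⟩ := this
        have := hψinjC₀ (by exact_mod_cast hsC₀ hy) (by exact_mod_cast hs'C₀ hx) hyx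
        rwa [← this]
    have hPcard : P.card = uncov.card := Finset.card_image_of_injOn himginj
    have hPprop : ∀ w ∈ P, w ⊆ C ∧ w.card = 2 ∧
        t < (G.filter (fun e' => w ⊆ e')).card := by
      intro w hw
      rw [hPdef, Finset.mem_image] at hw
      obtain ⟨s, hs, rfl⟩ := hw
      obtain ⟨hsC₀, hs2, -⟩ := mem_uncovPairs.mp hs
      have hwC : s.image ψ ⊆ C := fun y hy => by
        rw [Finset.mem_image] at hy
        obtain ⟨x, hx, rfl⟩ := hy
        exact hψC x (hsC₀ hx)
      have hw2 : (s.image ψ).card = 2 := by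
        rw [Finset.card_image_of_injOn (hψinjC₀.mono (by exact_mod_cast hsC₀)), hs2]
      refine ⟨hwC, hw2, ?_⟩
      obtain ⟨a, b, hab, habs⟩ := Finset.card_eq_two.mp hw2
      have haC : a ∈ C := hwC (by rw [habs]; simp)
      have hbC : b ∈ C := hwC (by rw [habs]; simp)
      obtain ⟨e₀, he₀, hae₀, hbe₀⟩ := hcov a haC b hbC hab
      rw [hG', Finset.mem_filter] at he₀
      exact he₀.2 (s.image ψ) (by rw [habs]; exact Finset.insert_subset hae₀ (by simp [hbe₀]))
        hw2
    -- size bound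
    have hcoreH : C₀ ⊆ hverts H := core_subset_hverts hm hC₀ hHeq
    have hBH : ∀ s ∈ uncov, B s ⊆ hverts H := by
      intro s hs x hx
      have hedge : (s ∪ B s : Finset ℕ) ∈ H := by
        rw [hHeq]; exact Finset.mem_union_right _ (Finset.mem_image_of_mem _ hs)
      exact mem_hverts.mpr ⟨_, hedge, Finset.mem_union_right _ hx⟩
    have hsize : C.card + P.card * (r - 2) ≤ p := by
      have hdisjC₀B : Disjoint C₀ (uncov.biUnion B) := by
        rw [Finset.disjoint_biUnion_right]
        exact fun s hs => ((hB1 s hs).2).symm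
      have hsubH : C₀ ∪ uncov.biUnion B ⊆ hverts H := by
        apply Finset.union_subset hcoreH
        intro x hx
        rw [Finset.mem_biUnion] at hx
        obtain ⟨s, hs, hxs⟩ := hx
        exact hBH s hs hxs
      have h1 : (C₀ ∪ uncov.biUnion B).card = C₀.card + ∑ s ∈ uncov, (B s).card := by
        rw [Finset.card_union_of_disjoint hdisjC₀B, Finset.card_biUnion hB2]
      have h2 : ∑ s ∈ uncov, (B s).card = uncov.card * (r - 2) := by
        rw [Finset.sum_congr rfl (fun s hs => (hB1 s hs).1), Finset.sum_const, smul_eq_mul]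
      calc C.card + P.card * (r - 2) = C₀.card + ∑ s ∈ uncov, (B s).card := by
            rw [hCcard, ← hC₀, h2, hPcard]
        _ = (C₀ ∪ uncov.biUnion B).card := h1.symm
        _ ≤ p := Finset.card_le_card hsubH
    obtain ⟨E, hE1, hE2⟩ := greedy_edges hr hGu hGr hPprop hsize
    -- assembly
    set D : Finset ℕ → Finset ℕ := fun s => E (s.image ψ) \ s.image ψ with hD
    have hDdisjC : ∀ s ∈ uncov, Disjoint (D s) C := by
      intro s hs
      exact (hE1 _ (Finset.mem_image_of_mem _ hs)).2.2
    have hDpair : ∀ s ∈ uncov, ∀ s' ∈ uncov, s ≠ s' → Disjoint (D s) (D s') := by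
      intro s hs s' hs' hss'
      apply hE2 _ (Finset.mem_image_of_mem _ hs) _ (Finset.mem_image_of_mem _ hs')
      intro hc
      exact hss' (himginj (by exact_mod_cast hs) (by exact_mod_cast hs') hc)
    have hDcard : ∀ s ∈ uncov, (D s).card = r - 2 := by
      intro s hs
      obtain ⟨hEG, hsE, -⟩ := hE1 _ (Finset.mem_image_of_mem _ hs)
      rw [hD]; simp only
      rw [Finset.card_sdiff_of_subset hsE, hGu _ hEG, (hPprop _ (Finset.mem_image_of_mem _ hs)).2.1]
    have hgm : ∀ s, s ∈ uncov → ∃ gm : ℕ → ℕ, Set.InjOn gm (B s) ∧ (B s).image gm = D s := by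
      intro s hs
      have hc : (B s).card = (D s).card := by rw [(hB1 s hs).1, hDcard s hs]
      set eqv := Finset.equivOfCardEq hc with heqv
      have hinj : Set.InjOn (fun x => if h : x ∈ B s then (eqv ⟨x, h⟩ : ℕ) else x)
          (B s : Set ℕ) := by
        intro x hx y hy hxy
        simp only [Finset.mem_coe] at hx hy
        have hxy' : (if h : x ∈ B s then (eqv ⟨x, h⟩ : ℕ) else x)
            = (if h : y ∈ B s then (eqv ⟨y, h⟩ : ℕ) else y) := hxy
        rw [dif_pos hx, dif_pos hy] at hxy'
        exact congrArg Subtype.val (eqv.injective (Subtype.ext hxy'))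
      refine ⟨fun x => if h : x ∈ B s then (eqv ⟨x, h⟩ : ℕ) else x, hinj, ?_⟩
      apply Finset.eq_of_subset_of_card_le
      · intro y hy
        rw [Finset.mem_image] at hy
        obtain ⟨x, hx, rfl⟩ := hy
        simp only [dif_pos hx]
        exact (eqv ⟨x, hx⟩).2
      · rw [Finset.card_image_of_injOn hinj, hc]
    choose! gmap hgm1 hgm2 using hgm
    set Ψ : ℕ → ℕ := fun x => if x ∈ C₀ then ψ x
      else if h : ∃ s, s ∈ uncov ∧ x ∈ B s then gmap h.choose x else x with hΨ
    have hΨC₀ : ∀ x ∈ C₀, Ψ x = ψ x := fun x hx => by rw [hΨ]; simp only [if_pos hx]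
    have hΨB : ∀ s ∈ uncov, ∀ x ∈ B s, Ψ x = gmap s x := by
      intro s hs x hx
      have hxC₀ : x ∉ C₀ := fun hc => Finset.disjoint_left.mp (hB1 s hs).2 hx hc
      have hex : ∃ s', s' ∈ uncov ∧ x ∈ B s' := ⟨s, hs, hx⟩
      rw [hΨ]; simp only [if_neg hxC₀, dif_pos hex]
      have hspec := hex.choose_spec
      have : hex.choose = s := by
        by_contra hc
        exact Finset.disjoint_left.mp (hB2 _ hspec.1 s hs hc) hspec.2 hx
      rw [this]
    have hΨBimg : ∀ s ∈ uncov, (B s).image Ψ = D s := by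
      intro s hs
      rw [Finset.image_congr (fun x hx => hΨB s hs x hx)]
      exact hgm2 s hs
    have hvertsH : hverts H ⊆ C₀ ∪ uncov.biUnion B := by
      intro v hv
      obtain ⟨e, he, hve⟩ := mem_hverts.mp hv
      rw [hHeq] at he
      rcases Finset.mem_union.mp he with heF | heI
      · exact Finset.mem_union_left _ (hAC₀ (mem_hverts.mpr ⟨e, heF, hve⟩))
      · rw [Finset.mem_image] at heI
        obtain ⟨s, hs, rfl⟩ := heI
        rcases Finset.mem_union.mp hve with h | h
        · exact Finset.mem_union_left _ ((mem_uncovPairs.mp hs).1 h)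
        · exact Finset.mem_union_right _ (Finset.mem_biUnion.mpr ⟨s, hs, h⟩)
    have hΨmemC : ∀ x ∈ C₀, Ψ x ∈ C := fun x hx => by rw [hΨC₀ x hx]; exact hψC x hx
    have hΨmemD : ∀ s ∈ uncov, ∀ x ∈ B s, Ψ x ∈ D s := by
      intro s hs x hx
      rw [← hΨBimg s hs]
      exact Finset.mem_image_of_mem Ψ hx
    have hΨinj : Set.InjOn Ψ (hverts H : Set ℕ) := by
      intro x hx y hy hxy
      simp only [Finset.mem_coe] at hx hy
      have hx' := hvertsH hx
      have hy' := hvertsH hy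
      rcases Finset.mem_union.mp hx' with hxC | hxB <;>
        rcases Finset.mem_union.mp hy' with hyC | hyB
      · rw [hΨC₀ x hxC, hΨC₀ y hyC] at hxy
        exact hψinjC₀ (by exact_mod_cast hxC) (by exact_mod_cast hyC) hxy
      · obtain ⟨s, hs, hyBs⟩ := Finset.mem_biUnion.mp hyB
        have h1 : Ψ x ∈ C := hΨmemC x hxC
        have h2 : Ψ y ∈ D s := hΨmemD s hs y hyBs
        rw [hxy] at h1
        exact absurd h1 (Finset.disjoint_left.mp (hDdisjC s hs) h2)
      · obtain ⟨s, hs, hxBs⟩ := Finset.mem_biUnion.mp hxB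
        have h1 : Ψ y ∈ C := hΨmemC y hyC
        have h2 : Ψ x ∈ D s := hΨmemD s hs x hxBs
        rw [← hxy] at h1
        exact absurd h1 (Finset.disjoint_left.mp (hDdisjC s hs) h2)
      · obtain ⟨s, hs, hxBs⟩ := Finset.mem_biUnion.mp hxB
        obtain ⟨s', hs', hyBs⟩ := Finset.mem_biUnion.mp hyB
        by_cases hss' : s = s'
        · subst hss'
          rw [hΨB s hs x hxBs, hΨB s hs y hyBs] at hxy
          exact hgm1 s hs (by exact_mod_cast hxBs) (by exact_mod_cast hyBs) hxy
        · have h1 : Ψ x ∈ D s := hΨmemD s hs x hxBs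
          have h2 : Ψ y ∈ D s' := hΨmemD s' hs' y hyBs
          rw [hxy] at h1
          exact absurd h1 (Finset.disjoint_right.mp (hDpair s hs s' hs' hss') h2)
    have hΨedges : ∀ e ∈ H, e.image Ψ ∈ G := by
      intro e he
      rw [hHeq] at he
      rcases Finset.mem_union.mp he with heF | heI
      · have heA : e ⊆ A := fun x hx => mem_hverts.mpr ⟨e, heF, hx⟩
        have : e.image Ψ = e.image φ := Finset.image_congr (fun x hx => by
          rw [hΨC₀ x (hAC₀ (heA hx)), hψA x (heA hx)])
        rw [this]
        have := hφe e heF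
        rw [induced, Finset.mem_filter] at this
        exact hsubG this.1
      · rw [Finset.mem_image] at heI
        obtain ⟨s, hs, rfl⟩ := heI
        have hsC₀ : s ⊆ C₀ := (mem_uncovPairs.mp hs).1
        have himg : (s ∪ B s).image Ψ = s.image ψ ∪ D s := by
          rw [Finset.image_union]
          congr 1
          · exact Finset.image_congr (fun x hx => hΨC₀ x (hsC₀ hx))
          · exact hΨBimg s hs
        rw [himg, hD]
        simp only
        rw [Finset.union_sdiff_of_subset (hE1 _ (Finset.mem_image_of_mem _ hs)).2.1]
        exact (hE1 _ (Finset.mem_image_of_mem _ hs)).1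
    exact hfree ⟨Ψ, hΨinj, hΨedges⟩
  · -- card bound
    set pp := ((Finset.range n).powersetCard 2).filter
      (fun s => (G.filter (fun e' => s ⊆ e')).card ≤ t) with hpp
    have hsubB : G \ G' ⊆ pp.biUnion (fun s => G.filter (fun e => s ⊆ e)) := by
      intro e he
      rw [Finset.mem_sdiff] at he
      obtain ⟨heG, heG'⟩ := he
      rw [hG', Finset.mem_filter] at heG'
      push_neg at heG'
      obtain ⟨s, hse, hs2, hcard⟩ := heG' heG
      rw [Finset.mem_biUnion]
      refine ⟨s, ?_, Finset.mem_filter.mpr ⟨heG, hse⟩⟩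
      rw [hpp, Finset.mem_filter, Finset.mem_powersetCard]
      exact ⟨⟨hse.trans (hGr e heG), hs2⟩, hcard⟩
    calc (G \ G').card ≤ (pp.biUnion (fun s => G.filter (fun e => s ⊆ e))).card :=
          Finset.card_le_card hsubB
      _ ≤ ∑ s ∈ pp, (G.filter (fun e => s ⊆ e)).card := Finset.card_biUnion_le
      _ ≤ ∑ _s ∈ pp, t := Finset.sum_le_sum (fun s hs => (Finset.mem_filter.mp hs).2)
      _ = pp.card * t := by rw [Finset.sum_const, smul_eq_mul]
      _ ≤ n.choose 2 * t := by
          apply Nat.mul_le_mul_right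
          calc pp.card ≤ ((Finset.range n).powersetCard 2).card :=
                Finset.card_le_card (Finset.filter_subset _ _)
            _ = n.choose 2 := by rw [Finset.card_powersetCard, Finset.card_range]
      _ = p * n.choose (r - 3) * n.choose 2 := by rw [ht]; ring

lemma exSet_bdd {r n : ℕ} {P : HG → Prop} :
    ∀ k ∈ {m : ℕ | ∃ G : HG, Uniform r G ∧ (∀ e ∈ G, e ⊆ Finset.range n) ∧ P G ∧ G.card = m},
      k ≤ n.choose r := by
  rintro k ⟨G, hu, hr, _, rfl⟩
  have : G ⊆ (Finset.range n).powersetCard r := by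
    intro e he
    rw [Finset.mem_powersetCard]
    exact ⟨hr e he, hu e he⟩
  calc G.card ≤ ((Finset.range n).powersetCard r).card := Finset.card_le_card this
    _ = n.choose r := by rw [Finset.card_powersetCard, Finset.card_range]

lemma exNum_le_choose {r n : ℕ} {P : HG → Prop} : exNum r n P ≤ n.choose r :=
  csSup_le' exSet_bdd

lemma exNum_spec {r n : ℕ} {P : HG → Prop} (hP : P ∅) :
    ∃ G : HG, Uniform r G ∧ (∀ e ∈ G, e ⊆ Finset.range n) ∧ P G ∧ G.card = exNum r n P := by
  have hne : {m : ℕ | ∃ G : HG, Uniform r G ∧ (∀ e ∈ G, e ⊆ Finset.range n) ∧ P G ∧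
      G.card = m}.Nonempty := ⟨0, ∅, by simp [Uniform], by simp, hP, by simp⟩
  have hbdd : BddAbove {m : ℕ | ∃ G : HG, Uniform r G ∧ (∀ e ∈ G, e ⊆ Finset.range n) ∧ P G ∧
      G.card = m} := ⟨n.choose r, fun k hk => exSet_bdd k hk⟩
  exact Nat.sSup_mem hne hbdd

lemma le_exNum {r n : ℕ} {P : HG → Prop} {G : HG} (hu : Uniform r G)
    (hr : ∀ e ∈ G, e ⊆ Finset.range n) (hP : P G) : G.card ≤ exNum r n P :=
  le_csSup ⟨n.choose r, fun k hk => exSet_bdd k hk⟩ ⟨G, hu, hr, hP, rfl⟩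

lemma empty_hfam_free {F : HG} {m : ℕ} (hm : 1 ≤ m) : ¬ ContainsHFam F (m + 1) (∅ : HG) := by
  rintro ⟨C, hC, -, hcov⟩
  obtain ⟨a, ha, b, hb, hab⟩ := Finset.one_lt_card.mp (by omega : 1 < C.card)
  obtain ⟨e, he, -⟩ := hcov a ha b hb hab
  exact absurd he (Finset.notMem_empty e)

lemma expanded_nonempty {r m : ℕ} {F H : HG} (hm : 1 ≤ m)
    (hH : IsExpandedClique r F (m + 1) H) : H.Nonempty := by
  obtain ⟨C₀, hFC, hC₀, B, hB1, hB2, hHeq⟩ := hH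
  by_cases hun : (uncovPairs F C₀).Nonempty
  · obtain ⟨s, hs⟩ := hun
    exact ⟨s ∪ B s, by rw [hHeq]; exact Finset.mem_union_right _ (Finset.mem_image_of_mem _ hs)⟩
  · obtain ⟨a, ha, b, hb, hab⟩ := Finset.one_lt_card.mp (by omega : 1 < C₀.card)
    have hs : ({a, b} : Finset ℕ) ⊆ C₀ :=
      fun x hx => by simp at hx; rcases hx with rfl | rfl <;> assumption
    have h2 : ({a, b} : Finset ℕ).card = 2 := by
      rw [Finset.card_insert_of_notMem (by simp [hab]), Finset.card_singleton]
    by_cases hcov : ∃ e ∈ F, ({a, b} : Finset ℕ) ⊆ e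
    · obtain ⟨e, he, -⟩ := hcov
      exact ⟨e, by rw [hHeq]; exact Finset.mem_union_left _ he⟩
    · exact absurd ⟨({a, b} : Finset ℕ), mem_uncovPairs.mpr ⟨hs, h2, hcov⟩⟩ hun

lemma empty_copy_free {H : HG} (hne : H.Nonempty) : ¬ IsCopyIn H (∅ : HG) := by
  rintro ⟨φ, -, he⟩
  obtain ⟨e, heH⟩ := hne
  exact absurd (he e heH) (Finset.notMem_empty _)

lemma swap_range {n v : ℕ} (hv : v < n + 1) {e : Finset ℕ} (her : e ⊆ Finset.range (n + 1))
    (hve : v ∉ e) : e.image (Equiv.swap v n) ⊆ Finset.range n := by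
  intro x hx
  rw [Finset.mem_image] at hx
  obtain ⟨y, hy, rfl⟩ := hx
  have hyn : y < n + 1 := Finset.mem_range.mp (her hy)
  have hyv : y ≠ v := fun h => hve (h ▸ hy)
  rw [Finset.mem_range]
  by_cases hyn' : y = n
  · subst hyn'
    rw [Equiv.swap_apply_right]
    omega
  · rw [Equiv.swap_apply_of_ne_of_ne hyv hyn']
    omega

lemma averaging {r m n : ℕ} {F : HG} (hm : 1 ≤ m) :
    (n + 1 - r) * exNum r (n + 1) (fun G => ¬ ContainsHFam F (m + 1) G) ≤
      (n + 1) * exNum r n (fun G => ¬ ContainsHFam F (m + 1) G) := by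
  classical
  obtain ⟨G, hGu, hGr, hGP, hGcard⟩ :=
    exNum_spec (r := r) (n := n + 1) (P := fun G => ¬ ContainsHFam F (m + 1) G)
      (empty_hfam_free hm)
  have hkey : ∀ v ∈ Finset.range (n + 1), (G.filter (fun e => v ∉ e)).card ≤
      exNum r n (fun G => ¬ ContainsHFam F (m + 1) G) := by
    intro v hv
    set σ := Equiv.swap v n with hσ
    set Gv := G.filter (fun e => v ∉ e) with hGv
    set G'' := Gv.image (fun e => e.image σ) with hG''
    have hinj : Set.InjOn (fun e : Finset ℕ => e.image σ) (↑Gv : Set (Finset ℕ)) :=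
      fun e₁ _ e₂ _ h => Finset.image_injective σ.injective h
    have hcard : G''.card = Gv.card := Finset.card_image_of_injOn hinj
    rw [← hcard]
    apply le_exNum
    · intro e'' he''
      rw [hG'', Finset.mem_image] at he''
      obtain ⟨e, he, rfl⟩ := he''
      rw [Finset.card_image_of_injective _ σ.injective]
      exact hGu e ((Finset.filter_subset _ _) he)
    · intro e'' he''
      rw [hG'', Finset.mem_image] at he''
      obtain ⟨e, he, rfl⟩ := he''
      rw [hGv, Finset.mem_filter] at he
      exact swap_range (Finset.mem_range.mp hv) (hGr e he.1) he.2
    · intro hfam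
      exact hGP (containsHFam_mono (Finset.filter_subset _ _)
        (containsHFam_relabel σ hfam))
  have hsum : ∑ v ∈ Finset.range (n + 1), (G.filter (fun e => v ∉ e)).card =
      G.card * (n + 1 - r) := by
    have h1 : ∀ v, (G.filter (fun e => v ∉ e)).card = ∑ e ∈ G, if v ∉ e then 1 else 0 :=
      fun v => Finset.card_filter _ _
    rw [Finset.sum_congr rfl (fun v _ => h1 v), Finset.sum_comm]
    have h2 : ∀ e ∈ G, (∑ v ∈ Finset.range (n + 1), if v ∉ e then 1 else 0) = n + 1 - r := by
      intro e he
      rw [← Finset.card_filter]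
      have : (Finset.range (n + 1)).filter (fun v => v ∉ e) = Finset.range (n + 1) \ e := by
        rw [Finset.sdiff_eq_filter]
      rw [this, Finset.card_sdiff_of_subset (hGr e he), Finset.card_range, hGu e he]
    rw [Finset.sum_congr rfl h2, Finset.sum_const, smul_eq_mul]
  calc (n + 1 - r) * exNum r (n + 1) (fun G => ¬ ContainsHFam F (m + 1) G)
      = G.card * (n + 1 - r) := by rw [hGcard, mul_comm]
    _ = ∑ v ∈ Finset.range (n + 1), (G.filter (fun e => v ∉ e)).card := hsum.symm
    _ ≤ ∑ _v ∈ Finset.range (n + 1), exNum r n (fun G => ¬ ContainsHFam F (m + 1) G) :=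
        Finset.sum_le_sum hkey
    _ = (n + 1) * exNum r n (fun G => ¬ ContainsHFam F (m + 1) G) := by
        rw [Finset.sum_const, Finset.card_range, smul_eq_mul]

lemma err_tendsto {r : ℕ} (hr : 3 ≤ r) (p : ℕ) :
    Filter.Tendsto
      (fun n : ℕ => (p : ℝ) * (n.choose (r - 3) : ℝ) * (n.choose 2 : ℝ) / (n.choose r : ℝ))
      Filter.atTop (nhds 0) := by
  set K : ℝ := (p : ℝ) * (r.factorial : ℝ) * 2 ^ r with hK
  refine squeeze_zero' ?_ ?_ (tendsto_const_div_atTop_nhds_zero_nat K)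
  · filter_upwards [Filter.eventually_ge_atTop (2 * r)] with n hn
    positivity
  · filter_upwards [Filter.eventually_ge_atTop (2 * r)] with n hn
    have hrn : r ≤ n := by omega
    have hn1 : 1 ≤ n := by omega
    have hnR : (1 : ℝ) ≤ (n : ℝ) := by exact_mod_cast hn1
    have hden_pos : (0 : ℝ) < (n.choose r : ℝ) := by
      exact_mod_cast Nat.choose_pos hrn
    have hnum : (p : ℝ) * (n.choose (r - 3) : ℝ) * (n.choose 2 : ℝ)
        ≤ (p : ℝ) * (n : ℝ) ^ (r - 1) := by
      have h1 : (n.choose (r - 3) : ℝ) ≤ (n : ℝ) ^ (r - 3) := by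
        exact_mod_cast Nat.choose_le_pow n (r - 3)
      have h2 : (n.choose 2 : ℝ) ≤ (n : ℝ) ^ 2 := by
        exact_mod_cast Nat.choose_le_pow n 2
      have h3 : (n : ℝ) ^ (r - 3) * (n : ℝ) ^ 2 = (n : ℝ) ^ (r - 1) := by
        rw [← pow_add]
        congr 1
        omega
      calc (p : ℝ) * (n.choose (r - 3) : ℝ) * (n.choose 2 : ℝ)
          ≤ (p : ℝ) * ((n : ℝ) ^ (r - 3) * (n : ℝ) ^ 2) := by
            rw [mul_assoc]
            apply mul_le_mul_of_nonneg_left _ (by positivity)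
            exact mul_le_mul h1 h2 (by positivity) (by positivity)
        _ = (p : ℝ) * (n : ℝ) ^ (r - 1) := by rw [h3]
    have hden : (n : ℝ) ^ r / (2 ^ r * (r.factorial : ℝ)) ≤ (n.choose r : ℝ) := by
      have h1 : (((n + 1 - r : ℕ) : ℝ)) ^ r / (r.factorial : ℝ) ≤ (n.choose r : ℝ) :=
        Nat.pow_le_choose r n
      have h2 : (n : ℝ) / 2 ≤ ((n + 1 - r : ℕ) : ℝ) := by
        have he : ((n + 1 - r : ℕ) : ℝ) = (n : ℝ) + 1 - (r : ℝ) := by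
          have hrn1 : r ≤ n + 1 := by omega
          push_cast [Nat.cast_sub hrn1]
          ring
        rw [he]
        have h2r : ((2 * r : ℕ) : ℝ) ≤ (n : ℝ) := by exact_mod_cast hn
        push_cast at h2r
        nlinarith
      calc (n : ℝ) ^ r / (2 ^ r * (r.factorial : ℝ))
          = ((n : ℝ) / 2) ^ r / (r.factorial : ℝ) := by
            rw [div_pow]
            ring
        _ ≤ (((n + 1 - r : ℕ) : ℝ)) ^ r / (r.factorial : ℝ) := by
            apply (div_le_div_iff_of_pos_right (by positivity : (0:ℝ) < (r.factorial : ℝ))).mpr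
            exact pow_le_pow_left₀ (by positivity) h2 r
        _ ≤ (n.choose r : ℝ) := h1
    have hpow : (n : ℝ) ^ r = (n : ℝ) ^ (r - 1) * (n : ℝ) := by
      rw [← pow_succ]
      congr 1
      omega
    calc (p : ℝ) * (n.choose (r - 3) : ℝ) * (n.choose 2 : ℝ) / (n.choose r : ℝ)
        ≤ ((p : ℝ) * (n : ℝ) ^ (r - 1)) / ((n : ℝ) ^ r / (2 ^ r * (r.factorial : ℝ))) :=
          div_le_div₀ (by positivity) hnum (by positivity) hden
      _ = K / n := by
          rw [hK, hpow]
          have hn0 : (n : ℝ) ≠ 0 := by positivity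
          field_simp

/-- Every `H^F_{m+1}`-free graph can be made `ℋ^F_{m+1}`-free by
deleting `O(n^{r-1})` edges; in particular `π(H^F_{m+1}) = π(ℋ^F_{m+1})`. -/
theorem stmt_11 (r m : ℕ) (hr : 3 ≤ r) (F : HG) (hF : Uniform r F)
    (hFn : (hverts F).card ≤ m + 1)
    (H : HG) (hH : IsExpandedClique r F (m + 1) H) :
    (∀ n : ℕ, ∀ G : HG, Uniform r G → (∀ e ∈ G, e ⊆ Finset.range n) →
      ¬ IsCopyIn H G →
      ∃ G' : HG, G' ⊆ G ∧ ¬ ContainsHFam F (m + 1) G' ∧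
        (G.card : ℝ) - ((hverts H).card : ℝ) * (n.choose (r - 3) : ℝ) * (n.choose 2 : ℝ)
          ≤ (G'.card : ℝ)) ∧
    (∃ L : ℝ,
      Filter.Tendsto
        (fun n => (exNum r n (fun G => ¬ IsCopyIn H G) : ℝ) / (n.choose r : ℝ))
        Filter.atTop (nhds L) ∧
      Filter.Tendsto
        (fun n => (exNum r n (fun G => ¬ ContainsHFam F (m + 1) G) : ℝ) / (n.choose r : ℝ))
        Filter.atTop (nhds L)) := by
  classical
  rcases Nat.eq_zero_or_pos m with hm0 | hm
  · -- degenerate case m = 0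
    subst hm0
    obtain ⟨C₀, hFC, hC₀, B, -, -, hHeq⟩ := hH
    have hF0 : F = ∅ := by
      rw [Finset.eq_empty_iff_forall_notMem]
      intro e he
      have h1 : e ⊆ C₀ := fun x hx => hFC (mem_hverts.mpr ⟨e, he, hx⟩)
      have h2 := Finset.card_le_card h1
      rw [hF e he, hC₀] at h2
      omega
    have hun : uncovPairs F C₀ = ∅ := by
      rw [Finset.eq_empty_iff_forall_notMem]
      intro s hs
      obtain ⟨h1, h2, -⟩ := mem_uncovPairs.mp hs
      have h3 := Finset.card_le_card h1
      rw [h2, hC₀] at h3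
      omega
    have hHempty : H = ∅ := by
      rw [hHeq, hun]
      simp [hF0]
    have hcopyall : ∀ G : HG, IsCopyIn H G := fun G => by
      rw [hHempty]
      exact ⟨id, by simp [hverts], by simp⟩
    have hfamall : ∀ G : HG, ContainsHFam F (0 + 1) G := by
      intro G
      refine ⟨{0}, by simp, ⟨id, by simp [hF0, hverts], by simp [hF0]⟩, ?_⟩
      intro u hu v hv huv
      simp only [Finset.mem_singleton] at hu hv
      subst hu; subst hv
      exact absurd rfl huv
    constructor
    · intro n G _ _ hfree
      exact absurd (hcopyall G) hfree
    · refine ⟨0, ?_, ?_⟩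
      · have hz : ∀ n : ℕ, exNum r n (fun G => ¬ IsCopyIn H G) = 0 := by
          intro n
          have hset : {k : ℕ | ∃ G : HG, Uniform r G ∧ (∀ e ∈ G, e ⊆ Finset.range n) ∧
              (¬ IsCopyIn H G) ∧ G.card = k} = ∅ := by
            ext k
            simp only [Set.mem_setOf_eq, Set.mem_empty_iff_false, iff_false]
            rintro ⟨G, -, -, hP, -⟩
            exact hP (hcopyall G)
          unfold exNum
          rw [hset]
          simpa using csSup_empty
        have : (fun n : ℕ => (exNum r n (fun G => ¬ IsCopyIn H G) : ℝ) / (n.choose r : ℝ))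
            = fun _ => (0 : ℝ) := by
          funext n
          rw [hz n]
          simp
        rw [this]
        exact tendsto_const_nhds
      · have hz : ∀ n : ℕ, exNum r n (fun G => ¬ ContainsHFam F (0 + 1) G) = 0 := by
          intro n
          have hset : {k : ℕ | ∃ G : HG, Uniform r G ∧ (∀ e ∈ G, e ⊆ Finset.range n) ∧
              (¬ ContainsHFam F (0 + 1) G) ∧ G.card = k} = ∅ := by
            ext k
            simp only [Set.mem_setOf_eq, Set.mem_empty_iff_false, iff_false]
            rintro ⟨G, -, -, hP, -⟩
            exact hP (hfamall G)
          unfold exNum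
          rw [hset]
          simpa using csSup_empty
        have : (fun n : ℕ => (exNum r n (fun G => ¬ ContainsHFam F (0 + 1) G) : ℝ)
              / (n.choose r : ℝ)) = fun _ => (0 : ℝ) := by
          funext n
          rw [hz n]
          simp
        rw [this]
        exact tendsto_const_nhds
  · -- main case m ≥ 1
    have hHne := expanded_nonempty hm hH
    constructor
    · intro n G hGu hGr hfree
      obtain ⟨G', hsub, hfree', hbound⟩ := deletion hr hm hH hGu hGr hfree
      refine ⟨G', hsub, hfree', ?_⟩
      have h1 : G'.card ≤ G.card := Finset.card_le_card hsub
      have h2 : (G \ G').card = G.card - G'.card := Finset.card_sdiff_of_subset hsub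
      rw [h2] at hbound
      have hreal : (G.card : ℝ) - (G'.card : ℝ)
          ≤ (((hverts H).card * n.choose (r - 3) * n.choose 2 : ℕ) : ℝ) := by
        rw [← Nat.cast_sub h1]
        exact_mod_cast hbound
      push_cast at hreal
      linarith
    · set b : ℕ → ℕ := fun n => exNum r n (fun G => ¬ ContainsHFam F (m + 1) G) with hbdef
      set a : ℕ → ℕ := fun n => exNum r n (fun G => ¬ IsCopyIn H G) with hadef
      have hba : ∀ n, b n ≤ a n := by
        intro n
        obtain ⟨G, hGu, hGr, hGP, hGc⟩ :=
          exNum_spec (r := r) (n := n) (P := fun G => ¬ ContainsHFam F (m + 1) G)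
            (empty_hfam_free hm)
        calc b n = G.card := hGc.symm
          _ ≤ a n := le_exNum hGu hGr (fun hcopy => hGP (copy_to_fam hm hH hcopy))
      have hab : ∀ n, a n ≤ b n + (hverts H).card * n.choose (r - 3) * n.choose 2 := by
        intro n
        obtain ⟨G, hGu, hGr, hGP, hGc⟩ :=
          exNum_spec (r := r) (n := n) (P := fun G => ¬ IsCopyIn H G)
            (empty_copy_free hHne)
        obtain ⟨G', hsub, hfree', hbound⟩ := deletion hr hm hH hGu hGr hGP
        have h1 : G'.card ≤ b n := le_exNum (fun e he => hGu e (hsub he))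
          (fun e he => hGr e (hsub he)) hfree'
        have h2 : (G \ G').card = G.card - G'.card := Finset.card_sdiff_of_subset hsub
        have h3 : G'.card ≤ G.card := Finset.card_le_card hsub
        calc a n = G.card := hGc.symm
          _ ≤ G'.card + (hverts H).card * n.choose (r - 3) * n.choose 2 := by omega
          _ ≤ b n + (hverts H).card * n.choose (r - 3) * n.choose 2 := by omega
      set dens : ℕ → ℝ := fun n => (b n : ℝ) / (n.choose r : ℝ) with hdensdef
      have hstep : ∀ n, r ≤ n → dens (n + 1) ≤ dens n := by
        intro n hn
        have hpos1 : (0 : ℝ) < (n.choose r : ℝ) := by exact_mod_cast Nat.choose_pos hn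
        have hpos2 : (0 : ℝ) < ((n + 1).choose r : ℝ) := by
          exact_mod_cast Nat.choose_pos (by omega : r ≤ n + 1)
        rw [hdensdef]
        simp only
        rw [div_le_div_iff₀ hpos2 hpos1]
        have hnat : b (n + 1) * n.choose r ≤ b n * (n + 1).choose r := by
          have havg := averaging (r := r) (m := m) (n := n) (F := F) hm
          have hid := Nat.choose_mul_succ_eq n r
          have h1 : b (n + 1) * n.choose r * (n + 1)
              = ((n + 1 - r) * b (n + 1)) * (n + 1).choose r := by
            calc b (n + 1) * n.choose r * (n + 1)
                = b (n + 1) * (n.choose r * (n + 1)) := by ring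
              _ = b (n + 1) * ((n + 1).choose r * (n + 1 - r)) := by rw [hid]
              _ = ((n + 1 - r) * b (n + 1)) * (n + 1).choose r := by ring
          have h2 : ((n + 1 - r) * b (n + 1)) * (n + 1).choose r
              ≤ ((n + 1) * b n) * (n + 1).choose r := Nat.mul_le_mul_right _ havg
          have h3 : b (n + 1) * n.choose r * (n + 1) ≤ b n * (n + 1).choose r * (n + 1) := by
            rw [h1]
            calc ((n + 1 - r) * b (n + 1)) * (n + 1).choose r
                ≤ ((n + 1) * b n) * (n + 1).choose r := h2
              _ = b n * (n + 1).choose r * (n + 1) := by ring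
          exact Nat.le_of_mul_le_mul_right h3 (by omega)
        exact_mod_cast hnat
      have hanti : Antitone (fun k => dens (k + r)) := by
        apply antitone_nat_of_succ_le
        intro k
        have h1 : k + 1 + r = (k + r) + 1 := by omega
        rw [h1]
        exact hstep (k + r) (Nat.le_add_left r k)
      have hbdd : BddBelow (Set.range (fun k => dens (k + r))) := by
        refine ⟨0, ?_⟩
        rintro x ⟨k, rfl⟩
        rw [hdensdef]
        positivity
      set L := ⨅ k, dens (k + r) with hLdef
      have hbT' : Filter.Tendsto (fun k => dens (k + r)) Filter.atTop (nhds L) :=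
        tendsto_atTop_ciInf hanti hbdd
      have hbT : Filter.Tendsto dens Filter.atTop (nhds L) :=
        (Filter.tendsto_add_atTop_iff_nat r).mp hbT'
      have herr := err_tendsto hr ((hverts H).card)
      have hupperT : Filter.Tendsto (fun n : ℕ => dens n + ((hverts H).card : ℝ)
          * (n.choose (r - 3) : ℝ) * (n.choose 2 : ℝ) / (n.choose r : ℝ))
          Filter.atTop (nhds L) := by
        have := hbT.add herr
        rwa [add_zero] at this
      have haT : Filter.Tendsto (fun n : ℕ => (a n : ℝ) / (n.choose r : ℝ))
          Filter.atTop (nhds L) := by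
        apply tendsto_of_tendsto_of_tendsto_of_le_of_le' hbT hupperT
        · filter_upwards [Filter.eventually_ge_atTop r] with n hn
          have hpos : (0 : ℝ) < (n.choose r : ℝ) := by exact_mod_cast Nat.choose_pos hn
          show (b n : ℝ) / (n.choose r : ℝ) ≤ (a n : ℝ) / (n.choose r : ℝ)
          gcongr
          exact_mod_cast hba n
        · filter_upwards [Filter.eventually_ge_atTop r] with n hn
          have hpos : (0 : ℝ) < (n.choose r : ℝ) := by exact_mod_cast Nat.choose_pos hn
          calc (a n : ℝ) / (n.choose r : ℝ)
              ≤ ((b n : ℝ) + ((hverts H).card : ℝ) * (n.choose (r - 3) : ℝ)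
                  * (n.choose 2 : ℝ)) / (n.choose r : ℝ) := by
                gcongr
                exact_mod_cast hab n
            _ = dens n + ((hverts H).card : ℝ) * (n.choose (r - 3) : ℝ)
                  * (n.choose 2 : ℝ) / (n.choose r : ℝ) := by
                rw [add_div]
      exact ⟨L, haT, hbT⟩
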